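/- Suppose h : ℝ → ℝ has property (L), and let U = {x ∈ ℝ : h(x) > 0}. Then there exists a countable collection G of closed bounded intervals such that: (i) the union of the intervals in G equals U; (ii) every I ∈ G intersects exactly two other intervals of G, one on its left and one on its right, and the ratio of lengths of any two intersecting intervals of G lies in [1/2, 2]; (iii) any two disjoint intervals I, I′ ∈ G are separated by a distance at least |I|/4; (iv) for every I ∈ G the double interval 2I (same center, twice the length) is contained in U; (v) every I ∈ G satisfies max{|I|, inf_{x∈I} h(x), sup_{x∈I} h(x)} ≤ 6 min{|I|, inf_{x∈I} h(x), sup_{x∈I} h(x)}; (vi) there exist nonnegative C^∞ functions ψ_I, each supported in the corresponding I ∈ G, with Σ_{I∈G} ψ_I(x) = 1 for x ∈ U and Σ_{I∈G} ψ_I(x) = 0 for x ∉ U, and such that for every integer j ≥ 0 there is a constant C_j, independent of h, with |ψ_I^{(j)}(x)| ≤ C_j |I|^{−j} for all I ∈ G and all x ∈ ℝ. -/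

import Mathlib

open MeasureTheory Real Set
open scoped ENNReal NNReal Topology Classical

noncomputable section

/-- A continuous nonnegative `h : ℝ → ℝ` has property (L) if for every bounded interval `J`,
either `sup_J h ≤ 2 inf_J h` or `sup_J h < 2|J|`. -/
def PropertyL (h : ℝ → ℝ) : Prop :=
  Continuous h ∧ (∀ x, 0 ≤ h x) ∧
    ∀ a b : ℝ, a ≤ b →
      sSup (h '' Set.Icc a b) ≤ 2 * sInf (h '' Set.Icc a b) ∨
        sSup (h '' Set.Icc a b) < 2 * (b - a)

namespace Whit

lemma iteratedDeriv_const0 (i : ℕ) : iteratedDeriv i (fun _ : ℝ => (0:ℝ)) = fun _ => 0 := by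
  induction i with
  | zero => simp [iteratedDeriv_zero]
  | succ n ih => rw [iteratedDeriv_succ, ih]; simp

lemma iteratedDeriv_const1 (i : ℕ) (hi : i ≠ 0) :
    iteratedDeriv i (fun _ : ℝ => (1:ℝ)) = fun _ => 0 := by
  obtain ⟨n, rfl⟩ := Nat.exists_eq_succ_of_ne_zero hi
  induction n with
  | zero => rw [iteratedDeriv_succ, iteratedDeriv_zero]; simp
  | succ m ih => rw [iteratedDeriv_succ, ih (by simp)]; simp

lemma exists_M (i : ℕ) : ∃ M : ℝ, 0 ≤ M ∧
    ∀ x : ℝ, |iteratedDeriv i Real.smoothTransition x| ≤ M := by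
  rcases eq_or_ne i 0 with rfl | hi
  · exact ⟨1, zero_le_one, fun x => by
      rw [iteratedDeriv_zero, abs_le]
      exact ⟨by linarith [Real.smoothTransition.nonneg x], Real.smoothTransition.le_one x⟩⟩
  · have hc : ContinuousOn (fun x => |iteratedDeriv i Real.smoothTransition x|) (Icc (0:ℝ) 1) :=
      ((Real.smoothTransition.contDiff (n := (⊤:ℕ∞))).continuous_iteratedDeriv i (by exact_mod_cast le_top)).abs.continuousOn
    obtain ⟨C, hC⟩ := (isCompact_Icc (a := (0:ℝ)) (b := 1)).exists_bound_of_continuousOn hc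
    refine ⟨max C 0, le_max_right _ _, fun x => ?_⟩
    rcases le_or_gt x 0 with hx | hx
    · rcases eq_or_lt_of_le hx with rfl | hx'
      · exact le_trans (by simpa using hC 0 (by constructor <;> norm_num)) (le_max_left _ _)
      · have : iteratedDeriv i Real.smoothTransition x = 0 := by
          have hev : Real.smoothTransition =ᶠ[nhds x] (fun _ => (0:ℝ)) := by
            filter_upwards [Iio_mem_nhds hx'] with y hy
            exact Real.smoothTransition.zero_of_nonpos (le_of_lt hy)
          rw [hev.iteratedDeriv_eq, iteratedDeriv_const0]
        simp [this, le_max_iff]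
    · rcases le_or_gt x 1 with hx1 | hx1
      · exact le_trans (by simpa using hC x ⟨hx.le, hx1⟩) (le_max_left _ _)
      · have : iteratedDeriv i Real.smoothTransition x = 0 := by
          have hev : Real.smoothTransition =ᶠ[nhds x] (fun _ => (1:ℝ)) := by
            filter_upwards [Ioi_mem_nhds hx1] with y hy
            exact Real.smoothTransition.one_of_one_le (le_of_lt hy)
          rw [hev.iteratedDeriv_eq, iteratedDeriv_const1 i hi]
        simp [this, le_max_iff]

def M (i : ℕ) : ℝ := (exists_M i).choose

lemma M_nonneg (i : ℕ) : 0 ≤ M i := (exists_M i).choose_spec.1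

lemma M_bound (i : ℕ) (x : ℝ) : |iteratedDeriv i Real.smoothTransition x| ≤ M i :=
  (exists_M i).choose_spec.2 x

def Cp (j : ℕ) : ℝ := 2 * M j * 16 ^ j + 1

lemma Cp_pos (j : ℕ) : 0 < Cp j := by
  have := M_nonneg j
  have : (0:ℝ) ≤ 2 * M j * 16 ^ j := by positivity
  unfold Cp; linarith

end Whit
namespace Whit

section H

variable {h : ℝ → ℝ}

lemma img_ne {a b : ℝ} (hab : a ≤ b) : (h '' Icc a b).Nonempty :=
  ⟨h a, a, ⟨le_refl a, hab⟩, rfl⟩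

lemma bddAbove_img (hL : PropertyL h) (a b : ℝ) : BddAbove (h '' Icc a b) :=
  (isCompact_Icc.image hL.1).bddAbove

lemma le_sSup_img (hL : PropertyL h) {a b p : ℝ} (hp : p ∈ Icc a b) :
    h p ≤ sSup (h '' Icc a b) :=
  le_csSup (bddAbove_img hL a b) ⟨p, hp, rfl⟩

lemma sInf_le_img (hL : PropertyL h) {a b p : ℝ} (hp : p ∈ Icc a b) :
    sInf (h '' Icc a b) ≤ h p :=
  csInf_le ⟨0, fun y ⟨q, _, hq⟩ => hq ▸ hL.2.1 q⟩ ⟨p, hp, rfl⟩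

lemma sInf_img_nonneg (hL : PropertyL h) {a b : ℝ} (hab : a ≤ b) :
    0 ≤ sInf (h '' Icc a b) :=
  le_csInf (img_ne hab) (fun y ⟨q, _, hq⟩ => hq ▸ hL.2.1 q)

lemma sInf_le_sSup_img (hL : PropertyL h) {a b : ℝ} (hab : a ≤ b) :
    sInf (h '' Icc a b) ≤ sSup (h '' Icc a b) :=
  le_trans (sInf_le_img hL ⟨le_refl a, hab⟩) (le_sSup_img hL ⟨le_refl a, hab⟩)

/-- Key consequence 1: distance from a point of `U` to any zero of `h`. -/
lemma lemZ (hL : PropertyL h) {x z : ℝ} (hx : 0 < h x) (hz : h z = 0) :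
    h x < 2 * |x - z| := by
  set a := min x z; set b := max x z
  have hab : a ≤ b := min_le_max
  have hxm : x ∈ Icc a b := ⟨min_le_left _ _, le_max_left _ _⟩
  have hzm : z ∈ Icc a b := ⟨min_le_right _ _, le_max_right _ _⟩
  have hsup := le_sSup_img hL hxm
  rcases hL.2.2 a b hab with H | H
  · exfalso
    have h1 : sInf (h '' Icc a b) ≤ 0 := hz ▸ sInf_le_img hL hzm
    linarith
  · have : b - a = |x - z| := by rw [abs_sub_comm]; exact max_sub_min_eq_abs x z
    rw [this] at H; linarith

/-- Key consequence 2: on an interval of length at most `h p / 2` containing `p`,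
`h` is comparable to `h p` within factor 2. -/
lemma lemS (hL : PropertyL h) {a b p : ℝ} (hp : p ∈ Icc a b) (hpos : 0 < h p)
    (hlen : b - a ≤ h p / 2) :
    sSup (h '' Icc a b) ≤ 2 * sInf (h '' Icc a b) ∧
    h p / 2 ≤ sInf (h '' Icc a b) ∧ sSup (h '' Icc a b) ≤ 2 * h p := by
  have hab : a ≤ b := le_trans hp.1 hp.2
  have hsup := le_sSup_img hL hp
  have hinf := sInf_le_img hL hp
  rcases hL.2.2 a b hab with H | H
  · exact ⟨H, by linarith, by linarith⟩
  · exfalso; linarith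

lemma lemC (hL : PropertyL h) {x y : ℝ} (hx : 0 < h x) (hxy : |y - x| ≤ h x / 2) :
    h x / 2 ≤ h y ∧ h y ≤ 2 * h x := by
  set a := min x y; set b := max x y
  have hxm : x ∈ Icc a b := ⟨min_le_left _ _, le_max_left _ _⟩
  have hym : y ∈ Icc a b := ⟨min_le_right _ _, le_max_right _ _⟩
  have hlen : b - a ≤ h x / 2 := by
    have : b - a = |y - x| := max_sub_min_eq_abs x y
    linarith [this ▸ hxy]
  obtain ⟨h1, h2, h3⟩ := lemS hL hxm hx hlen
  exact ⟨le_trans h2 (sInf_le_img hL hym), le_trans (le_sSup_img hL hym) h3⟩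

lemma lemC_pos (hL : PropertyL h) {x y : ℝ} (hx : 0 < h x) (hxy : |y - x| ≤ h x / 2) :
    0 < h y := by
  have := (lemC hL hx hxy).1; linarith

end H

end Whit
namespace Whit

section Chain

variable (h : ℝ → ℝ)

def step (x : ℝ) : ℝ := x + 3/10 * h x

def stepB (x : ℝ) : ℝ := x - 3/10 * h x

def tc (x₀ : ℝ) : ℤ → ℝ := fun n =>
  if 0 ≤ n then (step h)^[n.toNat] x₀ else (stepB h)^[(-n).toNat] x₀

def sc (x₀ : ℝ) (n : ℤ) : ℝ := tc h x₀ (n+1) - tc h x₀ n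

def refc (x₀ : ℝ) (n : ℤ) : ℝ := if 0 ≤ n then tc h x₀ n else tc h x₀ (n+1)

def Hc (x₀ : ℝ) (n : ℤ) : ℝ := h (refc h x₀ n)

variable {h}

lemma tc_zero (x₀ : ℝ) : tc h x₀ 0 = x₀ := by simp [tc]

lemma tc_succ (x₀ : ℝ) {n : ℤ} (hn : 0 ≤ n) : tc h x₀ (n+1) = step h (tc h x₀ n) := by
  have h1 : (0:ℤ) ≤ n + 1 := by omega
  have h2 : (n+1).toNat = n.toNat + 1 := by omega
  simp only [tc, if_pos hn, if_pos h1, h2, Function.iterate_succ_apply']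

lemma tc_pred (x₀ : ℝ) {n : ℤ} (hn : n ≤ 0) : tc h x₀ (n-1) = stepB h (tc h x₀ n) := by
  rcases eq_or_lt_of_le hn with rfl | hn'
  · show tc h x₀ (-1) = stepB h (tc h x₀ 0)
    have : ((-(-1):ℤ)).toNat = 1 := by omega
    simp [tc, this]
  · have h1 : ¬ (0:ℤ) ≤ n - 1 := by omega
    have h2 : ¬ (0:ℤ) ≤ n := by omega
    have h3 : (-(n-1)).toNat = (-n).toNat + 1 := by omega
    simp only [tc, if_neg h1, if_neg h2, h3, Function.iterate_succ_apply']

variable (hL : PropertyL h)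
include hL

lemma step_cmp {x : ℝ} (hx : 0 < h x) :
    h x / 2 ≤ h (step h x) ∧ h (step h x) ≤ 2 * h x := by
  apply lemC hL hx
  rw [show step h x - x = 3/10 * h x by unfold step; ring, abs_of_nonneg (by linarith)]
  linarith

lemma stepB_cmp {x : ℝ} (hx : 0 < h x) :
    h x / 2 ≤ h (stepB h x) ∧ h (stepB h x) ≤ 2 * h x := by
  apply lemC hL hx
  rw [show stepB h x - x = -(3/10 * h x) by unfold stepB; ring, abs_neg,
    abs_of_nonneg (by linarith)]
  linarith

lemma step_pos {x : ℝ} (hx : 0 < h x) : 0 < h (step h x) := by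
  have := (step_cmp hL hx).1; linarith

lemma stepB_pos {x : ℝ} (hx : 0 < h x) : 0 < h (stepB h x) := by
  have := (stepB_cmp hL hx).1; linarith

variable {x₀ : ℝ} (hx₀ : 0 < h x₀)
include hx₀

lemma tc_pos (n : ℤ) : 0 < h (tc h x₀ n) := by
  have hpos : ∀ k : ℕ, 0 < h ((step h)^[k] x₀) := by
    intro k; induction k with
    | zero => simpa using hx₀
    | succ m ih => rw [Function.iterate_succ_apply']; exact step_pos hL ih
  have hneg : ∀ k : ℕ, 0 < h ((stepB h)^[k] x₀) := by
    intro k; induction k with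
    | zero => simpa using hx₀
    | succ m ih => rw [Function.iterate_succ_apply']; exact stepB_pos hL ih
  unfold tc; split <;> [exact hpos _; exact hneg _]

lemma Hc_pos (n : ℤ) : 0 < Hc h x₀ n := by
  unfold Hc refc; split <;> exact tc_pos hL hx₀ _

lemma sc_eq (n : ℤ) : sc h x₀ n = 3/10 * Hc h x₀ n := by
  by_cases hn : 0 ≤ n
  · rw [sc, tc_succ x₀ hn, Hc, refc, if_pos hn, step]; ring
  · have h1 : n + 1 ≤ 0 := by omega
    have := tc_pred (h := h) x₀ h1
    rw [show n + 1 - 1 = n by ring] at this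
    rw [sc, this, Hc, refc, if_neg hn, stepB]; ring

lemma sc_pos (n : ℤ) : 0 < sc h x₀ n := by
  rw [sc_eq hL hx₀]; have := Hc_pos hL hx₀ n; linarith

lemma cmp_left (n : ℤ) :
    Hc h x₀ n / 2 ≤ h (tc h x₀ n) ∧ h (tc h x₀ n) ≤ 2 * Hc h x₀ n := by
  by_cases hn : 0 ≤ n
  · rw [Hc, refc, if_pos hn]
    have := tc_pos hL hx₀ n; constructor <;> linarith
  · have h1 : n + 1 ≤ 0 := by omega
    have heq := tc_pred (h := h) x₀ h1
    rw [show n + 1 - 1 = n by ring] at heq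
    rw [Hc, refc, if_neg hn, heq]
    exact stepB_cmp hL (tc_pos hL hx₀ (n+1))

lemma cmp_right (n : ℤ) :
    Hc h x₀ n / 2 ≤ h (tc h x₀ (n+1)) ∧ h (tc h x₀ (n+1)) ≤ 2 * Hc h x₀ n := by
  by_cases hn : 0 ≤ n
  · rw [Hc, refc, if_pos hn, tc_succ x₀ hn]
    exact step_cmp hL (tc_pos hL hx₀ n)
  · rw [Hc, refc, if_neg hn]
    have := tc_pos hL hx₀ (n+1); constructor <;> linarith

lemma Hc_ratio (n : ℤ) : Hc h x₀ (n+1) ≤ 2 * Hc h x₀ n ∧ Hc h x₀ n ≤ 2 * Hc h x₀ (n+1) := by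
  by_cases hn : 0 ≤ n
  · have h1 : (0:ℤ) ≤ n + 1 := by omega
    have := cmp_right hL hx₀ n
    rw [Hc, refc, if_pos h1] at *
    rw [Hc, refc, if_pos hn] at *
    constructor <;> linarith [this.1, this.2]
  · by_cases h2 : 0 ≤ n + 1
    · have h3 : n = -1 := by omega
      subst h3
      have heq : Hc h x₀ (-1) = Hc h x₀ (-1+1) := by
        rw [Hc, Hc, refc, refc, if_neg (by omega), if_pos (by omega)]
      rw [← heq]
      have := Hc_pos hL hx₀ (-1); constructor <;> linarith
    · have := cmp_left hL hx₀ (n+1)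
      rw [Hc, refc, if_neg h2] at *
      rw [Hc, refc, if_neg hn] at *
      rw [show n + 1 + 1 = n + 2 by ring] at *
      constructor <;> linarith [this.1, this.2]

lemma sc_ratio (n : ℤ) : sc h x₀ (n+1) ≤ 2 * sc h x₀ n ∧ sc h x₀ n ≤ 2 * sc h x₀ (n+1) := by
  rw [sc_eq hL hx₀, sc_eq hL hx₀]
  have := Hc_ratio hL hx₀ n
  constructor <;> linarith [this.1, this.2]

end Chain

end Whit
namespace Whit

section Geom

variable (h : ℝ → ℝ)

def eps (x₀ : ℝ) (n : ℤ) : ℝ := 1/6 * min (sc h x₀ (n-1)) (sc h x₀ n)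

def ia (x₀ : ℝ) (n : ℤ) : ℝ := tc h x₀ n - eps h x₀ n

def ib (x₀ : ℝ) (n : ℤ) : ℝ := tc h x₀ (n+1) + eps h x₀ (n+1)

def Ilen (x₀ : ℝ) (n : ℤ) : ℝ := ib h x₀ n - ia h x₀ n

def Ip (x₀ : ℝ) (n : ℤ) : ℝ × ℝ := (ia h x₀ n, ib h x₀ n)

variable {h} {x₀ : ℝ} (hL : PropertyL h) (hx₀ : 0 < h x₀)
include hL hx₀

lemma eps_bounds (n : ℤ) : sc h x₀ n / 12 ≤ eps h x₀ n ∧ eps h x₀ n ≤ sc h x₀ n / 6 := by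
  have hr := (sc_ratio hL hx₀ (n-1)).1
  rw [show n - 1 + 1 = n by ring] at hr
  have h2 : sc h x₀ n / 2 ≤ min (sc h x₀ (n-1)) (sc h x₀ n) := by
    apply le_min (by linarith) (by linarith [sc_pos hL hx₀ n])
  have h3 : min (sc h x₀ (n-1)) (sc h x₀ n) ≤ sc h x₀ n := min_le_right _ _
  unfold eps; constructor <;> linarith

lemma eps_succ_bounds (n : ℤ) :
    sc h x₀ n / 12 ≤ eps h x₀ (n+1) ∧ eps h x₀ (n+1) ≤ sc h x₀ n / 6 := by
  have hr := (sc_ratio hL hx₀ n).2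
  have h2 : sc h x₀ n / 2 ≤ min (sc h x₀ n) (sc h x₀ (n+1)) := by
    apply le_min (by linarith [sc_pos hL hx₀ n]) (by linarith)
  have h3 : min (sc h x₀ n) (sc h x₀ (n+1)) ≤ sc h x₀ n := min_le_left _ _
  unfold eps
  rw [show n + 1 - 1 = n by ring]
  constructor <;> linarith

lemma eps_pos (n : ℤ) : 0 < eps h x₀ n := by
  have := (eps_bounds hL hx₀ n).1; have := sc_pos hL hx₀ n; linarith

lemma Ilen_eq (n : ℤ) : Ilen h x₀ n = sc h x₀ n + eps h x₀ n + eps h x₀ (n+1) := by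
  unfold Ilen ia ib sc; ring

lemma Ilen_bounds (n : ℤ) :
    7/6 * sc h x₀ n ≤ Ilen h x₀ n ∧ Ilen h x₀ n ≤ 4/3 * sc h x₀ n := by
  rw [Ilen_eq hL hx₀]
  obtain ⟨e1, e2⟩ := eps_bounds hL hx₀ n
  obtain ⟨f1, f2⟩ := eps_succ_bounds hL hx₀ n
  constructor <;> linarith

lemma Ilen_pos (n : ℤ) : 0 < Ilen h x₀ n := by
  have := (Ilen_bounds hL hx₀ n).1; have := sc_pos hL hx₀ n; linarith

lemma ia_lt_ib (n : ℤ) : ia h x₀ n < ib h x₀ n := by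
  have := Ilen_pos hL hx₀ n; unfold Ilen at this; linarith

lemma Ilen_window (n : ℤ) :
    Hc h x₀ n / 3 ≤ Ilen h x₀ n ∧ Ilen h x₀ n ≤ Hc h x₀ n / 2 := by
  obtain ⟨l1, l2⟩ := Ilen_bounds hL hx₀ n
  have hs := sc_eq (hL := hL) (hx₀ := hx₀) n
  have := Hc_pos hL hx₀ n
  constructor <;> nlinarith

lemma refc_mem (n : ℤ) : refc h x₀ n ∈ Icc (ia h x₀ n) (ib h x₀ n) := by
  have h1 := eps_pos hL hx₀ n
  have h2 := eps_pos hL hx₀ (n+1)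
  have h3 := sc_pos hL hx₀ n
  unfold refc ia ib sc at *
  split <;> constructor <;> linarith

lemma tc_mem (n : ℤ) : tc h x₀ n ∈ Icc (ia h x₀ n) (ib h x₀ n) := by
  have h1 := eps_pos hL hx₀ n
  have h2 := eps_pos hL hx₀ (n+1)
  have h3 := sc_pos hL hx₀ n
  unfold ia ib sc at *
  constructor <;> linarith

lemma tc_succ_mem (n : ℤ) : tc h x₀ (n+1) ∈ Icc (ia h x₀ n) (ib h x₀ n) := by
  have h1 := eps_pos hL hx₀ n
  have h2 := eps_pos hL hx₀ (n+1)
  have h3 := sc_pos hL hx₀ n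
  unfold ia ib sc at *
  constructor <;> linarith

/-- The key comparability facts on the interval `I n`. -/
lemma sup_inf_facts (n : ℤ) :
    sSup (h '' Icc (ia h x₀ n) (ib h x₀ n)) ≤ 2 * sInf (h '' Icc (ia h x₀ n) (ib h x₀ n)) ∧
    Hc h x₀ n / 2 ≤ sInf (h '' Icc (ia h x₀ n) (ib h x₀ n)) ∧
    sSup (h '' Icc (ia h x₀ n) (ib h x₀ n)) ≤ 2 * Hc h x₀ n ∧
    Hc h x₀ n ≤ sSup (h '' Icc (ia h x₀ n) (ib h x₀ n)) ∧
    sInf (h '' Icc (ia h x₀ n) (ib h x₀ n)) ≤ Hc h x₀ n := by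
  have hm := refc_mem hL hx₀ n
  have hp : 0 < h (refc h x₀ n) := Hc_pos hL hx₀ n
  have hw := (Ilen_window hL hx₀ n).2
  have hlen : ib h x₀ n - ia h x₀ n ≤ h (refc h x₀ n) / 2 := by
    unfold Ilen at hw; exact le_trans hw (by rw [Hc] )
  obtain ⟨c1, c2, c3⟩ := lemS hL hm hp hlen
  exact ⟨c1, c2, c3, le_sSup_img hL hm, sInf_le_img hL hm⟩

end Geom

end Whit
namespace Whit

section Geom2

variable {h : ℝ → ℝ} {x₀ : ℝ} (hL : PropertyL h) (hx₀ : 0 < h x₀)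
include hL hx₀

/-- Property (v) for the interval `I n`. -/
lemma lemV (n : ℤ) :
    max (ib h x₀ n - ia h x₀ n)
      (max (sInf (h '' Icc (ia h x₀ n) (ib h x₀ n))) (sSup (h '' Icc (ia h x₀ n) (ib h x₀ n)))) ≤
    6 * min (ib h x₀ n - ia h x₀ n)
      (min (sInf (h '' Icc (ia h x₀ n) (ib h x₀ n))) (sSup (h '' Icc (ia h x₀ n) (ib h x₀ n)))) := by
  obtain ⟨c1, c2, c3, c4, c5⟩ := sup_inf_facts hL hx₀ n
  obtain ⟨w1, w2⟩ := Ilen_window hL hx₀ n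
  have hp := Hc_pos hL hx₀ n
  have hlen : ib h x₀ n - ia h x₀ n = Ilen h x₀ n := rfl
  rw [hlen, min_eq_left (show sInf (h '' Icc (ia h x₀ n) (ib h x₀ n)) ≤
      sSup (h '' Icc (ia h x₀ n) (ib h x₀ n)) by linarith),
    min_eq_left (show Ilen h x₀ n ≤ sInf (h '' Icc (ia h x₀ n) (ib h x₀ n)) by linarith)]
  apply max_le (by linarith)
  apply max_le (by linarith) (by linarith)

/-- Property (iv): the doubled interval is contained in `U`. -/
lemma double_sub (n : ℤ) :
    Icc (ia h x₀ n - Ilen h x₀ n / 2) (ib h x₀ n + Ilen h x₀ n / 2) ⊆ {x : ℝ | 0 < h x} := by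
  intro x hx
  simp only [mem_setOf_eq]
  by_contra hq
  have hx0 : h x = 0 := le_antisymm (not_lt.1 hq) (hL.2.1 x)
  obtain ⟨l1, l2⟩ := Ilen_bounds hL hx₀ n
  obtain ⟨e1, e2⟩ := eps_bounds hL hx₀ n
  obtain ⟨f1, f2⟩ := eps_succ_bounds hL hx₀ n
  have hs := sc_eq (hL := hL) (hx₀ := hx₀) n
  have hp := Hc_pos hL hx₀ n
  have hxl := hx.1; have hxr := hx.2
  have hia : ia h x₀ n = tc h x₀ n - eps h x₀ n := rfl
  have hib : ib h x₀ n = tc h x₀ (n+1) + eps h x₀ (n+1) := rfl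
  rcases le_total x (tc h x₀ n) with c1 | c1
  · have hd : tc h x₀ n - x ≤ Hc h x₀ n / 4 := by
      have : x ≥ ia h x₀ n - Ilen h x₀ n / 2 := hxl
      rw [hia] at this; linarith
    have hz := lemZ hL (tc_pos hL hx₀ n) hx0
    rw [abs_of_nonneg (by linarith)] at hz
    have := (cmp_left hL hx₀ n).1
    linarith
  · rcases le_total x (tc h x₀ (n+1)) with c2 | c2
    · have hz := lemZ hL (Hc_pos hL hx₀ n) hx0
      have hsc := sc_pos hL hx₀ n
      have habs : |refc h x₀ n - x| ≤ sc h x₀ n := by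
        have hscdef : sc h x₀ n = tc h x₀ (n+1) - tc h x₀ n := rfl
        unfold refc
        split
        · rw [abs_of_nonpos (by linarith)]; linarith
        · rw [abs_of_nonneg (by linarith)]; linarith
      have hHc : Hc h x₀ n = h (refc h x₀ n) := rfl
      linarith
    · have hd : x - tc h x₀ (n+1) ≤ Hc h x₀ n / 4 := by
        have : x ≤ ib h x₀ n + Ilen h x₀ n / 2 := hxr
        rw [hib] at this; linarith
      have hz := lemZ hL (tc_pos hL hx₀ (n+1)) hx0
      rw [abs_of_nonpos (by linarith)] at hz
      have := (cmp_right hL hx₀ n).1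
      linarith

lemma I_sub (n : ℤ) : Icc (ia h x₀ n) (ib h x₀ n) ⊆ {x : ℝ | 0 < h x} := by
  refine subset_trans (Icc_subset_Icc ?_ ?_) (double_sub hL hx₀ n) <;>
    have := Ilen_pos hL hx₀ n <;> linarith

lemma tc_strictMono : StrictMono (tc h x₀) :=
  strictMono_int_of_lt_succ (fun n => by have := sc_pos hL hx₀ n; unfold sc at this; linarith)

lemma ia_strictMono : StrictMono (ia h x₀) := by
  apply strictMono_int_of_lt_succ
  intro n
  have h1 := eps_pos hL hx₀ n
  have h2 := (eps_succ_bounds hL hx₀ n).2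
  have h3 := sc_pos hL hx₀ n
  have hd : sc h x₀ n = tc h x₀ (n+1) - tc h x₀ n := rfl
  unfold ia; linarith

lemma ib_strictMono : StrictMono (ib h x₀) := by
  apply strictMono_int_of_lt_succ
  intro n
  have h2 := (eps_bounds hL hx₀ (n+1)).2
  have h3 := sc_pos hL hx₀ (n+1)
  have h4 := eps_pos hL hx₀ (n+2)
  have hd : sc h x₀ (n+1) = tc h x₀ (n+1+1) - tc h x₀ (n+1) := rfl
  unfold ib
  rw [show n + 1 + 1 = n + 2 by ring] at *
  linarith

lemma eps_le_left (n : ℤ) : eps h x₀ n ≤ sc h x₀ (n-1) / 6 := by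
  unfold eps
  have := min_le_left (sc h x₀ (n-1)) (sc h x₀ n)
  linarith

/-- The gap estimate for non-adjacent intervals. -/
lemma gap_est {n m : ℤ} (hm : n + 2 ≤ m) :
    Ilen h x₀ n / 4 ≤ ia h x₀ m - ib h x₀ n ∧ Ilen h x₀ m / 4 ≤ ia h x₀ m - ib h x₀ n := by
  have hia : ia h x₀ m = tc h x₀ m - eps h x₀ m := rfl
  have hib : ib h x₀ n = tc h x₀ (n+1) + eps h x₀ (n+1) := rfl
  have hepsn1 := (eps_bounds hL hx₀ (n+1)).2
  have hepsm : eps h x₀ m ≤ sc h x₀ (m-1) / 6 := eps_le_left hL hx₀ m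
  have hr1 := (sc_ratio hL hx₀ n).2
  have hrm := (sc_ratio hL hx₀ (m-1)).1
  rw [show m - 1 + 1 = m by ring] at hrm
  obtain ⟨ln1, ln2⟩ := Ilen_bounds hL hx₀ n
  obtain ⟨lm1, lm2⟩ := Ilen_bounds hL hx₀ m
  rcases eq_or_lt_of_le hm with rfl | hm3
  · -- m = n + 2
    have hd : sc h x₀ (n+1) = tc h x₀ (n+1+1) - tc h x₀ (n+1) := rfl
    rw [show n + 1 + 1 = n + 2 by ring] at hd
    have heps2 : eps h x₀ (n+2) ≤ sc h x₀ (n+1) / 6 := by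
      have := eps_le_left hL hx₀ (n+2)
      rw [show n + 2 - 1 = n + 1 by ring] at this; exact this
    have hmm : sc h x₀ (n+2) ≤ 2 * sc h x₀ (n+1) := by
      have := (sc_ratio hL hx₀ (n+1)).1
      rw [show n + 1 + 1 = n + 2 by ring] at this; exact this
    rw [show n + 2 - 1 = n + 1 by ring] at hepsm
    constructor <;> [skip; skip] <;> rw [hia, hib] <;> nlinarith [sc_pos hL hx₀ (n+1)]
  · -- m ≥ n + 3
    have hd1 : tc h x₀ (n+2) ≤ tc h x₀ (m-1) :=
      (tc_strictMono hL hx₀).monotone (by omega)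
    have hd2 : tc h x₀ (m-1) + sc h x₀ (m-1) = tc h x₀ m := by
      have : sc h x₀ (m-1) = tc h x₀ (m-1+1) - tc h x₀ (m-1) := rfl
      rw [show m - 1 + 1 = m by ring] at this; linarith
    have hd3 : tc h x₀ (n+1) + sc h x₀ (n+1) = tc h x₀ (n+2) := by
      have : sc h x₀ (n+1) = tc h x₀ (n+1+1) - tc h x₀ (n+1) := rfl
      rw [show n + 1 + 1 = n + 2 by ring] at this; linarith
    have hrm2 : sc h x₀ m ≤ 2 * sc h x₀ (m-1) := hrm
    constructor <;> rw [hia, hib] <;>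
      nlinarith [sc_pos hL hx₀ (n+1), sc_pos hL hx₀ (m-1), sc_pos hL hx₀ m]

lemma gap_pos {n m : ℤ} (hm : n + 2 ≤ m) : ib h x₀ n < ia h x₀ m := by
  have := (gap_est hL hx₀ hm).1
  have := Ilen_pos hL hx₀ n
  linarith

/-- Neighbouring intervals have comparable lengths. -/
lemma Ilen_ratio (n : ℤ) :
    Ilen h x₀ (n+1) ≤ 2 * Ilen h x₀ n ∧ Ilen h x₀ n ≤ 2 * Ilen h x₀ (n+1) := by
  have r1 := sc_ratio hL hx₀ (n-1)
  rw [show n - 1 + 1 = n by ring] at r1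
  have r2 := sc_ratio hL hx₀ n
  have r3 := sc_ratio hL hx₀ (n+1)
  rw [show n + 1 + 1 = n + 2 by ring] at r3
  have p0 := sc_pos hL hx₀ (n-1)
  have p1 := sc_pos hL hx₀ n
  have p2 := sc_pos hL hx₀ (n+1)
  have p3 := sc_pos hL hx₀ (n+2)
  rw [Ilen_eq hL hx₀, Ilen_eq hL hx₀]
  unfold eps
  rw [show n + 1 - 1 = n by ring, show n + 1 + 1 = n + 2 by ring,
    show n + 2 - 1 = n + 1 by ring]
  simp only [min_def]
  split_ifs <;> constructor <;> linarith

end Geom2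

end Whit
namespace Whit

section Cover

variable {h : ℝ → ℝ} {x₀ : ℝ} (hL : PropertyL h) (hx₀ : 0 < h x₀)
include hL hx₀

/-- each basic segment of the chain is inside `U`. -/
lemma seg_sub (n : ℤ) : Icc (tc h x₀ n) (tc h x₀ (n+1)) ⊆ {x : ℝ | 0 < h x} := by
  intro z hz
  have hsc : sc h x₀ n = tc h x₀ (n+1) - tc h x₀ n := rfl
  have hs := sc_eq (hL := hL) (hx₀ := hx₀) n
  have hp := Hc_pos hL hx₀ n
  have hHc : Hc h x₀ n = h (refc h x₀ n) := rfl
  apply lemC_pos hL (show 0 < h (refc h x₀ n) from hHc ▸ hp)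
  by_cases hn : 0 ≤ n
  · rw [show refc h x₀ n = tc h x₀ n from by rw [refc, if_pos hn]] at hHc ⊢
    rw [abs_of_nonneg (by linarith [hz.1])]
    linarith [hz.2]
  · rw [show refc h x₀ n = tc h x₀ (n+1) from by rw [refc, if_neg hn]] at hHc ⊢
    rw [abs_of_nonpos (by linarith [hz.2])]
    linarith [hz.1]

lemma seg_le (n : ℤ) : tc h x₀ n ≤ tc h x₀ (n+1) := by
  have := sc_pos hL hx₀ n
  have hsc : sc h x₀ n = tc h x₀ (n+1) - tc h x₀ n := rfl
  linarith

lemma reach (n : ℤ) : uIcc x₀ (tc h x₀ n) ⊆ {x : ℝ | 0 < h x} := by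
  have base : uIcc x₀ (tc h x₀ 0) ⊆ {x : ℝ | 0 < h x} := by
    rw [tc_zero, uIcc_self]; simpa using hx₀
  have fwd : ∀ k : ℕ, uIcc x₀ (tc h x₀ k) ⊆ {x : ℝ | 0 < h x} := by
    intro k; induction k with
    | zero => exact_mod_cast base
    | succ m ih =>
      have hcast : ((m+1 : ℕ) : ℤ) = (m : ℤ) + 1 := by push_cast; ring
      rw [hcast]
      refine subset_trans (uIcc_subset_uIcc_union_uIcc (b := tc h x₀ m)) ?_
      apply union_subset ih
      refine subset_trans ?_ (seg_sub hL hx₀ m)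
      rw [uIcc_of_le (seg_le hL hx₀ m)]
  have bwd : ∀ k : ℕ, uIcc x₀ (tc h x₀ (-(k:ℤ))) ⊆ {x : ℝ | 0 < h x} := by
    intro k; induction k with
    | zero => exact_mod_cast base
    | succ m ih =>
      have hcast : (-((m+1 : ℕ) : ℤ)) = (-(m:ℤ)) - 1 := by push_cast; ring
      rw [hcast]
      refine subset_trans (uIcc_subset_uIcc_union_uIcc (b := tc h x₀ (-(m:ℤ)))) ?_
      apply union_subset ih
      have hseg := seg_sub hL hx₀ (-(m:ℤ) - 1)
      have hle := seg_le hL hx₀ (-(m:ℤ) - 1)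
      rw [show -(m:ℤ) - 1 + 1 = -(m:ℤ) by ring] at hseg hle
      refine subset_trans ?_ hseg
      rw [uIcc_of_ge hle]
  intro z hz
  rcases le_or_gt 0 n with hn | hn
  · obtain ⟨k, rfl⟩ : ∃ k : ℕ, n = (k : ℤ) := ⟨n.toNat, by omega⟩
    exact fwd _ hz
  · obtain ⟨k, rfl⟩ : ∃ k : ℕ, n = -(k : ℤ) := ⟨(-n).toNat, by omega⟩
    exact bwd _ hz

/-- every point of the interval `I n` is connected to `x₀` inside `U`. -/
lemma Icc_sub_comp (n : ℤ) {y : ℝ} (hy : y ∈ Icc (ia h x₀ n) (ib h x₀ n)) :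
    uIcc x₀ y ⊆ {x : ℝ | 0 < h x} := by
  refine subset_trans (uIcc_subset_uIcc_union_uIcc (b := tc h x₀ n))
    (union_subset (reach hL hx₀ n) ?_)
  refine subset_trans ?_ (I_sub hL hx₀ n)
  exact (Set.ordConnected_Icc).uIcc_subset (tc_mem hL hx₀ n) hy

/-- the chain covers its connected component. -/
lemma chain_covers {y : ℝ} (hy : 0 < h y) (hcon : uIcc x₀ y ⊆ {x : ℝ | 0 < h x}) :
    ∃ n : ℤ, y ∈ Icc (tc h x₀ n) (tc h x₀ (n+1)) := by
  rcases le_or_gt x₀ y with hxy | hxy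
  · -- go forward
    have hex : ∃ N : ℕ, y ≤ tc h x₀ (N:ℤ) := by
      by_contra hcon2
      push_neg at hcon2
      set g : ℕ → ℝ := fun k => tc h x₀ (k:ℤ) with hg
      have hmono : Monotone g := fun i j hij =>
        (tc_strictMono hL hx₀).monotone (by exact_mod_cast hij)
      have hbdd : BddAbove (Set.range g) := ⟨y, by rintro _ ⟨k, rfl⟩; exact (hcon2 k).le⟩
      set L := ⨆ k, g k with hLdef
      have htend : Filter.Tendsto g Filter.atTop (nhds L) := tendsto_atTop_ciSup hmono hbdd
      have hx0L : x₀ ≤ L := by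
        have : g 0 ≤ L := le_ciSup hbdd 0
        simpa [hg, tc_zero] using this
      have hLy : L ≤ y := ciSup_le (fun k => (hcon2 k).le)
      have hLU : 0 < h L := hcon (by rw [uIcc_of_le hxy]; exact ⟨hx0L, hLy⟩)
      have hdiff : Filter.Tendsto (fun k => g (k+1) - g k) Filter.atTop (nhds 0) := by
        have h2 : Filter.Tendsto (fun k => g (k+1)) Filter.atTop (nhds L) :=
          htend.comp (Filter.tendsto_add_atTop_nat 1)
        simpa using h2.sub htend
      have hstep : ∀ k : ℕ, g (k+1) - g k = 3/10 * h (g k) := by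
        intro k
        have hcast : ((k+1 : ℕ) : ℤ) = (k : ℤ) + 1 := by push_cast; ring
        simp only [hg]
        rw [hcast, tc_succ x₀ (by positivity), step]
        ring
      have hlim2 : Filter.Tendsto (fun k => 3/10 * h (g k)) Filter.atTop (nhds (3/10 * h L)) :=
        (hL.1.tendsto L |>.comp htend).const_mul _
      simp only [hstep] at hdiff
      have := tendsto_nhds_unique hdiff hlim2
      linarith
    classical
    rcases Nat.eq_zero_or_pos (Nat.find hex) with h0 | h0
    · have hNs := Nat.find_spec hex
      rw [h0] at hNs
      simp only [Nat.cast_zero] at hNs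
      refine ⟨0, ?_, ?_⟩
      · rw [tc_zero]; exact hxy
      · exact le_trans hNs (seg_le hL hx₀ 0)
    · obtain ⟨K, hK⟩ : ∃ K, Nat.find hex = K + 1 := ⟨Nat.find hex - 1, by omega⟩
      have hKlt : tc h x₀ (K:ℤ) < y := by
        have := Nat.find_min hex (m := K) (by omega)
        push_neg at this; exact this
      have hNs := Nat.find_spec hex
      rw [hK] at hNs; push_cast at hNs
      exact ⟨(K:ℤ), hKlt.le, hNs⟩
  · -- go backward
    have hex : ∃ N : ℕ, tc h x₀ (-(N:ℤ)) ≤ y := by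
      by_contra hcon2
      push_neg at hcon2
      set g : ℕ → ℝ := fun k => tc h x₀ (-(k:ℤ)) with hg
      have hmono : Antitone g := fun i j hij => (tc_strictMono hL hx₀).monotone (by omega)
      have hbdd : BddBelow (Set.range g) := ⟨y, by rintro _ ⟨k, rfl⟩; exact (hcon2 k).le⟩
      set L := ⨅ k, g k with hLdef
      have htend : Filter.Tendsto g Filter.atTop (nhds L) := tendsto_atTop_ciInf hmono hbdd
      have hx0L : L ≤ x₀ := by
        have : L ≤ g 0 := ciInf_le hbdd 0
        simpa [hg, tc_zero] using this
      have hLy : y ≤ L := le_ciInf (fun k => (hcon2 k).le)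
      have hLU : 0 < h L := hcon (by rw [uIcc_of_ge hxy.le]; exact ⟨hLy, hx0L⟩)
      have hdiff : Filter.Tendsto (fun k => g k - g (k+1)) Filter.atTop (nhds 0) := by
        have h2 : Filter.Tendsto (fun k => g (k+1)) Filter.atTop (nhds L) :=
          htend.comp (Filter.tendsto_add_atTop_nat 1)
        simpa using htend.sub h2
      have hstep : ∀ k : ℕ, g k - g (k+1) = 3/10 * h (g k) := by
        intro k
        have hcast : (-((k+1 : ℕ) : ℤ)) = (-(k:ℤ)) - 1 := by push_cast; ring
        simp only [hg]
        rw [hcast, tc_pred (h := h) x₀ (by omega), stepB]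
        ring
      have hlim2 : Filter.Tendsto (fun k => 3/10 * h (g k)) Filter.atTop (nhds (3/10 * h L)) :=
        (hL.1.tendsto L |>.comp htend).const_mul _
      simp only [hstep] at hdiff
      have := tendsto_nhds_unique hdiff hlim2
      linarith
    classical
    rcases Nat.eq_zero_or_pos (Nat.find hex) with h0 | h0
    · exfalso
      have hNs := Nat.find_spec hex
      rw [h0] at hNs
      simp only [Nat.cast_zero, neg_zero] at hNs
      rw [tc_zero] at hNs
      linarith
    · obtain ⟨K, hK⟩ : ∃ K, Nat.find hex = K + 1 := ⟨Nat.find hex - 1, by omega⟩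
      have hKgt : y < tc h x₀ (-(K:ℤ)) := by
        have := Nat.find_min hex (m := K) (by omega)
        push_neg at this; exact this
      have hNs := Nat.find_spec hex
      rw [hK] at hNs; push_cast at hNs
      refine ⟨-(K:ℤ) - 1, ?_, ?_⟩
      · rw [show -((K:ℤ)+1) = -(K:ℤ) - 1 by ring] at hNs
        exact hNs
      · rw [show -(K:ℤ) - 1 + 1 = -(K:ℤ) by ring]; exact hKgt.le

end Cover

end Whit
namespace Whit

section Psi

variable (h : ℝ → ℝ)

def tau (x₀ : ℝ) (n : ℤ) (x : ℝ) : ℝ :=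
  Real.smoothTransition ((x - (tc h x₀ (n+1) - eps h x₀ (n+1))) / (2 * eps h x₀ (n+1)))

def psi (x₀ : ℝ) (n : ℤ) (x : ℝ) : ℝ := tau h x₀ (n-1) x - tau h x₀ n x

variable {h} {x₀ : ℝ} (hL : PropertyL h) (hx₀ : 0 < h x₀)

lemma tau_pred_eq (n : ℤ) (x : ℝ) :
    tau h x₀ (n-1) x =
      Real.smoothTransition ((x - (tc h x₀ n - eps h x₀ n)) / (2 * eps h x₀ n)) := by
  rw [tau, show n - 1 + 1 = n by ring]

include hL hx₀

lemma tau_zero {n : ℤ} {x : ℝ} (hx : x ≤ tc h x₀ (n+1) - eps h x₀ (n+1)) :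
    tau h x₀ n x = 0 := by
  have he := eps_pos hL hx₀ (n+1)
  apply Real.smoothTransition.zero_of_nonpos
  apply div_nonpos_iff.mpr
  right
  constructor <;> linarith

lemma tau_one {n : ℤ} {x : ℝ} (hx : tc h x₀ (n+1) + eps h x₀ (n+1) ≤ x) :
    tau h x₀ n x = 1 := by
  have he := eps_pos hL hx₀ (n+1)
  apply Real.smoothTransition.one_of_one_le
  rw [le_div_iff₀ (by linarith)]
  linarith

/-- junction separation: left junction is left of right junction. -/
lemma j_le (n : ℤ) : tc h x₀ n + eps h x₀ n ≤ tc h x₀ (n+1) - eps h x₀ (n+1) := by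
  have h1 := (eps_bounds hL hx₀ n).2
  have h2 := (eps_succ_bounds hL hx₀ n).2
  have h3 := sc_pos hL hx₀ n
  have hsc : sc h x₀ n = tc h x₀ (n+1) - tc h x₀ n := rfl
  linarith

lemma tpe_le (n : ℤ) : tc h x₀ n + eps h x₀ n ≤ tc h x₀ (n+1) := by
  have h1 := (eps_bounds hL hx₀ n).2
  have h3 := sc_pos hL hx₀ n
  have hsc : sc h x₀ n = tc h x₀ (n+1) - tc h x₀ n := rfl
  linarith

lemma tme_le (n : ℤ) : tc h x₀ n ≤ tc h x₀ (n+1) - eps h x₀ (n+1) := by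
  have h2 := (eps_succ_bounds hL hx₀ n).2
  have h3 := sc_pos hL hx₀ n
  have hsc : sc h x₀ n = tc h x₀ (n+1) - tc h x₀ n := rfl
  linarith

lemma psi_nonneg (n : ℤ) (x : ℝ) : 0 ≤ psi h x₀ n x := by
  rw [psi]
  rcases le_total x (tc h x₀ (n+1) - eps h x₀ (n+1)) with hc | hc
  · rw [tau_zero hL hx₀ hc]
    have := Real.smoothTransition.nonneg ((x - (tc h x₀ (n-1+1) - eps h x₀ (n-1+1))) /
      (2 * eps h x₀ (n-1+1)))
    rw [tau]; linarith
  · have h1 : tau h x₀ (n-1) x = 1 := by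
      rw [tau_pred_eq]
      apply Real.smoothTransition.one_of_one_le
      have he := eps_pos hL hx₀ n
      rw [le_div_iff₀ (by linarith)]
      have := j_le hL hx₀ n
      linarith
    rw [h1]
    have := Real.smoothTransition.le_one ((x - (tc h x₀ (n+1) - eps h x₀ (n+1))) /
      (2 * eps h x₀ (n+1)))
    rw [tau]; linarith

lemma psi_zero_left {m : ℤ} {x : ℝ} (hx : x ≤ ia h x₀ m) : psi h x₀ m x = 0 := by
  have hia : ia h x₀ m = tc h x₀ m - eps h x₀ m := rfl
  have he := eps_pos hL hx₀ m
  rw [psi, tau_pred_eq]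
  have h1 : Real.smoothTransition ((x - (tc h x₀ m - eps h x₀ m)) / (2 * eps h x₀ m)) = 0 := by
    apply Real.smoothTransition.zero_of_nonpos
    apply div_nonpos_iff.mpr
    right; constructor <;> linarith
  have h2 : tau h x₀ m x = 0 := by
    apply tau_zero hL hx₀
    have := tme_le hL hx₀ m
    linarith
  rw [h1, h2]; ring

lemma psi_zero_right {m : ℤ} {x : ℝ} (hx : ib h x₀ m ≤ x) : psi h x₀ m x = 0 := by
  have hib : ib h x₀ m = tc h x₀ (m+1) + eps h x₀ (m+1) := rfl
  rw [psi, tau_pred_eq]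
  have h1 : Real.smoothTransition ((x - (tc h x₀ m - eps h x₀ m)) / (2 * eps h x₀ m)) = 1 := by
    apply Real.smoothTransition.one_of_one_le
    have he := eps_pos hL hx₀ m
    rw [le_div_iff₀ (by linarith)]
    have h2 := tpe_le hL hx₀ m
    have h3 := eps_pos hL hx₀ (m+1)
    linarith
  have h2 : tau h x₀ m x = 1 := tau_one hL hx₀ (by linarith)
  rw [h1, h2]; ring

lemma psi_support (n : ℤ) :
    Function.support (psi h x₀ n) ⊆ Icc (ia h x₀ n) (ib h x₀ n) := by
  intro x hx
  simp only [Function.mem_support] at hx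
  constructor
  · by_contra hc
    push_neg at hc
    exact hx (psi_zero_left hL hx₀ (le_of_lt hc))
  · by_contra hc
    push_neg at hc
    exact hx (psi_zero_right hL hx₀ (le_of_lt hc))

omit hL hx₀ in
lemma tau_contDiff (n : ℤ) : ContDiff ℝ (⊤:ℕ∞) (tau h x₀ n) := by
  apply Real.smoothTransition.contDiff.comp
  exact (contDiff_id.sub contDiff_const).div_const _

omit hL hx₀ in
lemma psi_contDiff (n : ℤ) : ContDiff ℝ (⊤:ℕ∞) (psi h x₀ n) :=
  (tau_contDiff (n-1)).sub (tau_contDiff n)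

/-- partition property at a point of the chain's component. -/
lemma psi_partition {x : ℝ} (n : ℤ) (hx : x ∈ Icc (tc h x₀ n) (tc h x₀ (n+1))) :
    ∃ k : ℤ, psi h x₀ k x + psi h x₀ (k+1) x = 1 ∧
      ∀ m : ℤ, m ≠ k → m ≠ k + 1 → psi h x₀ m x = 0 := by
  obtain ⟨hx1, hx2⟩ := hx
  rcases le_total x (tc h x₀ n + eps h x₀ n) with hc | hc
  · refine ⟨n - 1, ?_, ?_⟩
    · rw [show n - 1 + 1 = n by ring, psi, psi, show n - 1 - 1 = n - 2 by ring]
      have h1 : tau h x₀ (n-2) x = 1 := by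
        rw [show n - 2 = (n-1) - 1 by ring, tau_pred_eq]
        apply Real.smoothTransition.one_of_one_le
        have he := eps_pos hL hx₀ (n-1)
        rw [le_div_iff₀ (by linarith)]
        have h2 := tpe_le hL hx₀ (n-1)
        rw [show n - 1 + 1 = n by ring] at h2
        linarith
      have h2 : tau h x₀ n x = 0 := by
        apply tau_zero hL hx₀
        have := j_le hL hx₀ n
        linarith
      rw [h1, h2]; ring
    · intro m hm1 hm2
      rw [show n - 1 + 1 = n by ring] at hm2
      rcases lt_or_gt_of_ne hm1 with hml | hmg
      · -- m ≤ n - 2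
        apply psi_zero_right hL hx₀
        have hmono := (ib_strictMono hL hx₀).monotone (show m ≤ n - 2 by omega)
        have hib : ib h x₀ (n-2) = tc h x₀ (n-2+1) + eps h x₀ (n-2+1) := rfl
        rw [show n - 2 + 1 = n - 1 by ring] at hib
        have h2 := tpe_le hL hx₀ (n-1)
        rw [show n - 1 + 1 = n by ring] at h2
        linarith [hmono.trans_eq hib]
      · -- m ≥ n + 1
        apply psi_zero_left hL hx₀
        have hmono := (ia_strictMono hL hx₀).monotone (show n + 1 ≤ m by omega)
        have hia : ia h x₀ (n+1) = tc h x₀ (n+1) - eps h x₀ (n+1) := rfl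
        have h2 := j_le hL hx₀ n
        have : x ≤ ia h x₀ (n+1) := by rw [hia]; linarith
        linarith [this.trans hmono]
  · refine ⟨n, ?_, ?_⟩
    · rw [psi, psi, show n + 1 - 1 = n by ring]
      have h1 : tau h x₀ (n-1) x = 1 := by
        rw [tau_pred_eq]
        apply Real.smoothTransition.one_of_one_le
        have he := eps_pos hL hx₀ n
        rw [le_div_iff₀ (by linarith)]
        linarith
      have h2 : tau h x₀ (n+1) x = 0 := by
        apply tau_zero hL hx₀
        have := tme_le hL hx₀ (n+1)
        rw [show n + 1 + 1 = n + 2 by ring] at *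
        linarith
      rw [h1, h2]; ring
    · intro m hm1 hm2
      rcases lt_or_gt_of_ne hm1 with hml | hmg
      · -- m ≤ n - 1
        apply psi_zero_right hL hx₀
        have hmono := (ib_strictMono hL hx₀).monotone (show m ≤ n - 1 by omega)
        have hib : ib h x₀ (n-1) = tc h x₀ (n-1+1) + eps h x₀ (n-1+1) := rfl
        rw [show n - 1 + 1 = n by ring] at hib
        linarith [hmono.trans_eq hib]
      · -- m ≥ n + 2
        apply psi_zero_left hL hx₀
        have hmono := (ia_strictMono hL hx₀).monotone (show n + 2 ≤ m by omega)
        have hia : ia h x₀ (n+2) = tc h x₀ (n+2) - eps h x₀ (n+2) := rfl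
        have h2 := tme_le hL hx₀ (n+1)
        rw [show n + 1 + 1 = n + 2 by ring] at h2
        have : x ≤ ia h x₀ (n+2) := by rw [hia]; linarith
        linarith [this.trans hmono]

end Psi

end Whit
namespace Whit

section Deriv

lemma iter_affine (j : ℕ) (k d : ℝ) :
    iteratedDeriv j (fun x : ℝ => Real.smoothTransition (k*x + d)) =
      fun x => k^j * iteratedDeriv j Real.smoothTransition (k*x + d) := by
  induction j with
  | zero => funext x; simp
  | succ m ih =>
    funext x
    rw [iteratedDeriv_succ, ih, iteratedDeriv_succ]
    have hg : Differentiable ℝ (iteratedDeriv m Real.smoothTransition) := by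
      apply (Real.smoothTransition.contDiff (n := (⊤:ℕ∞))).differentiable_iteratedDeriv m
      exact_mod_cast WithTop.coe_lt_top m
    have hy : HasDerivAt (fun y : ℝ => k*y + d) k x := by
      simpa using ((hasDerivAt_id x).const_mul k).add_const d
    have h1 : HasDerivAt (fun y : ℝ => iteratedDeriv m Real.smoothTransition (k*y + d))
        (deriv (iteratedDeriv m Real.smoothTransition) (k*x + d) * k) x := by
      have := ((hg (k*x+d)).hasDerivAt).comp x hy; exact this
    rw [deriv_const_mul _ h1.differentiableAt, h1.deriv]
    ring

variable {h : ℝ → ℝ} {x₀ : ℝ} (hL : PropertyL h) (hx₀ : 0 < h x₀)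
include hL hx₀

lemma tau_iter_bound (n : ℤ) (j : ℕ) (x : ℝ) :
    |iteratedDeriv j (tau h x₀ n) x| ≤ (1/(2 * eps h x₀ (n+1)))^j * M j := by
  have he := eps_pos hL hx₀ (n+1)
  set w := 2 * eps h x₀ (n+1) with hw
  set c := tc h x₀ (n+1) - eps h x₀ (n+1) with hc
  have hwpos : 0 < w := by positivity
  have h1 : tau h x₀ n = fun z : ℝ => Real.smoothTransition ((1/w) * z + (-c/w)) := by
    funext z
    rw [tau]
    congr 1
    field_simp
    rw [hc]
    ring
  rw [h1, iter_affine]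
  rw [abs_mul, abs_pow, abs_of_nonneg (by positivity : (0:ℝ) ≤ 1/w)]
  exact mul_le_mul_of_nonneg_left (M_bound j _) (by positivity)

lemma iteratedDeriv_psi (n : ℤ) (j : ℕ) (x : ℝ) :
    iteratedDeriv j (psi h x₀ n) x =
      iteratedDeriv j (tau h x₀ (n-1)) x - iteratedDeriv j (tau h x₀ n) x := by
  have hpsi : psi h x₀ n = tau h x₀ (n-1) - tau h x₀ n := rfl
  rw [hpsi, ← iteratedDerivWithin_univ, ← iteratedDerivWithin_univ, ← iteratedDerivWithin_univ]
  exact iteratedDerivWithin_sub (mem_univ x) uniqueDiffOn_univ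
    (((tau_contDiff (n-1)).of_le (by exact_mod_cast le_top)).contDiffWithinAt)
    (((tau_contDiff n).of_le (by exact_mod_cast le_top)).contDiffWithinAt)

lemma psi_iter_bound (n : ℤ) (j : ℕ) (x : ℝ) :
    |iteratedDeriv j (psi h x₀ n) x| ≤ Cp j * (Ilen h x₀ n) ^ (-(j:ℤ)) := by
  have hlen := Ilen_pos hL hx₀ n
  have hM := M_nonneg j
  have b1 := tau_iter_bound hL hx₀ (n-1) j x
  rw [show n - 1 + 1 = n by ring] at b1
  have b2 := tau_iter_bound hL hx₀ n j x
  have key : |iteratedDeriv j (psi h x₀ n) x| ≤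
      (1/(2 * eps h x₀ n))^j * M j + (1/(2 * eps h x₀ (n+1)))^j * M j := by
    rw [iteratedDeriv_psi hL hx₀]
    exact (abs_sub _ _).trans (add_le_add b1 b2)
  have hep1 := eps_pos hL hx₀ n
  have hep2 := eps_pos hL hx₀ (n+1)
  have e1 : (1:ℝ)/(2 * eps h x₀ n) ≤ 16 / Ilen h x₀ n := by
    rw [div_le_div_iff₀ (by positivity) hlen]
    have := (eps_bounds hL hx₀ n).1
    have := (Ilen_bounds hL hx₀ n).2
    nlinarith
  have e2 : (1:ℝ)/(2 * eps h x₀ (n+1)) ≤ 16 / Ilen h x₀ n := by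
    rw [div_le_div_iff₀ (by positivity) hlen]
    have := (eps_succ_bounds hL hx₀ n).1
    have := (Ilen_bounds hL hx₀ n).2
    nlinarith
  have hpow : (0:ℝ) < (Ilen h x₀ n)^j := pow_pos hlen j
  have p1 : (1/(2 * eps h x₀ n))^j ≤ 16^j / (Ilen h x₀ n)^j := by
    calc (1/(2 * eps h x₀ n))^j ≤ (16 / Ilen h x₀ n)^j := pow_le_pow_left₀ (by positivity) e1 j
    _ = 16^j / (Ilen h x₀ n)^j := div_pow _ _ _
  have p2 : (1/(2 * eps h x₀ (n+1)))^j ≤ 16^j / (Ilen h x₀ n)^j := by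
    calc (1/(2 * eps h x₀ (n+1)))^j ≤ (16 / Ilen h x₀ n)^j :=
        pow_le_pow_left₀ (by positivity) e2 j
    _ = 16^j / (Ilen h x₀ n)^j := div_pow _ _ _
  have hb : |iteratedDeriv j (psi h x₀ n) x| ≤ 2 * M j * 16^j / (Ilen h x₀ n)^j := by
    have q1 : (1/(2 * eps h x₀ n))^j * M j ≤ 16^j / (Ilen h x₀ n)^j * M j :=
      mul_le_mul_of_nonneg_right p1 hM
    have q2 : (1/(2 * eps h x₀ (n+1)))^j * M j ≤ 16^j / (Ilen h x₀ n)^j * M j :=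
      mul_le_mul_of_nonneg_right p2 hM
    calc |iteratedDeriv j (psi h x₀ n) x| ≤ _ := key
    _ ≤ 16^j / (Ilen h x₀ n)^j * M j + 16^j / (Ilen h x₀ n)^j * M j := add_le_add q1 q2
    _ = 2 * M j * 16^j / (Ilen h x₀ n)^j := by ring
  rw [zpow_neg, zpow_natCast]
  calc |iteratedDeriv j (psi h x₀ n) x| ≤ 2 * M j * 16^j / (Ilen h x₀ n)^j := hb
  _ = (2 * M j * 16^j) * ((Ilen h x₀ n)^j)⁻¹ := by rw [div_eq_mul_inv]
  _ ≤ Cp j * ((Ilen h x₀ n)^j)⁻¹ := by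
      apply mul_le_mul_of_nonneg_right _ (by positivity)
      unfold Cp; linarith

end Deriv

end Whit
namespace Whit

section Comp

variable (h : ℝ → ℝ)

/-- The setoid of "same connected component of `U`". -/
def Stoid : Setoid {x : ℝ // 0 < h x} :=
  ⟨fun x y => uIcc (x:ℝ) (y:ℝ) ⊆ {z : ℝ | 0 < h z}, by
    constructor
    · intro x; rw [uIcc_self]; intro z hz; rw [mem_singleton_iff] at hz; rw [hz]; exact x.2
    · intro x y hxy; rwa [uIcc_comm]
    · intro x y z hxy hyz
      exact subset_trans (uIcc_subset_uIcc_union_uIcc (b := (y:ℝ))) (union_subset hxy hyz)⟩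

def rep : {x : ℝ // 0 < h x} → {x : ℝ // 0 < h x} :=
  fun x => (Quotient.mk (Stoid h) x).out

variable {h}

lemma rep_rel (x : {x : ℝ // 0 < h x}) :
    uIcc ((rep h x : ℝ)) (x : ℝ) ⊆ {z : ℝ | 0 < h z} :=
  Quotient.exact ((Quotient.mk (Stoid h) x).out_eq)

lemma rep_eq_of_rel {x y : {x : ℝ // 0 < h x}}
    (hxy : uIcc (x:ℝ) (y:ℝ) ⊆ {z : ℝ | 0 < h z}) : rep h x = rep h y :=
  congrArg Quotient.out (Quotient.sound (s := Stoid h) hxy)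

lemma rel_rep_eq {x y : {x : ℝ // 0 < h x}}
    (hxy : uIcc ((rep h x : ℝ)) ((rep h y : ℝ)) ⊆ {z : ℝ | 0 < h z}) : rep h x = rep h y := by
  have h1 : rep h x = rep h (rep h x) := by
    unfold rep
    rw [Quotient.out_eq]
  have h2 : rep h y = rep h (rep h y) := by
    unfold rep
    rw [Quotient.out_eq]
  rw [h1, h2]
  exact rep_eq_of_rel hxy

lemma abs_sub_le_of_mem_uIcc {x y z : ℝ} (hz : z ∈ uIcc x y) : |x - z| ≤ |x - y| := by
  rcases le_total x y with hc | hc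
  · rw [uIcc_of_le hc] at hz
    rw [abs_of_nonpos (by linarith [hz.1]), abs_of_nonpos (by linarith)]
    linarith [hz.2]
  · rw [uIcc_of_ge hc] at hz
    rw [abs_of_nonneg (by linarith [hz.2]), abs_of_nonneg (by linarith)]
    linarith [hz.1]

variable (hL : PropertyL h)
include hL

lemma uIcc_sub_of_close {r z : ℝ} (hr : 0 < h r) (hz : |z - r| ≤ h r / 2) :
    uIcc r z ⊆ {w : ℝ | 0 < h w} := by
  intro w hw
  apply lemC_pos hL hr
  calc |w - r| = |r - w| := abs_sub_comm _ _
  _ ≤ |r - z| := abs_sub_le_of_mem_uIcc hw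
  _ = |z - r| := abs_sub_comm _ _
  _ ≤ h r / 2 := hz

lemma R_countable : (Set.range (fun x : {x : ℝ // 0 < h x} => (rep h x : ℝ))).Countable := by
  classical
  have key : ∀ r : ℝ, 0 < h r → ∃ q : ℚ, r < (q:ℝ) ∧ (q:ℝ) < r + h r / 2 :=
    fun r hr => exists_rat_btwn (by linarith)
  set F : ℝ → ℚ := fun r => if hr : 0 < h r then (key r hr).choose else 0 with hFdef
  apply Set.countable_iff_exists_injOn.mpr
  refine ⟨fun r => Encodable.encode (F r), ?_⟩
  intro r1 hr1 r2 hr2 heq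
  obtain ⟨y1, hy1⟩ := hr1
  obtain ⟨y2, hy2⟩ := hr2
  have hp1 : 0 < h r1 := by rw [← hy1]; exact (rep h y1).2
  have hp2 : 0 < h r2 := by rw [← hy2]; exact (rep h y2).2
  have heqF : F r1 = F r2 := Encodable.encode_injective heq
  have hs1 := (key r1 hp1).choose_spec
  have hs2 := (key r2 hp2).choose_spec
  rw [hFdef] at heqF
  simp only [dif_pos hp1, dif_pos hp2] at heqF
  set q : ℝ := ((key r1 hp1).choose : ℝ) with hq
  have hq2 : ((key r2 hp2).choose : ℝ) = q := by rw [hq, heqF]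
  rw [hq2] at hs2
  have hc1 : uIcc r1 q ⊆ {w : ℝ | 0 < h w} :=
    uIcc_sub_of_close hL hp1 (by rw [abs_of_nonneg (by linarith [hs1.1])]; linarith [hs1.2])
  have hc2 : uIcc r2 q ⊆ {w : ℝ | 0 < h w} :=
    uIcc_sub_of_close hL hp2 (by rw [abs_of_nonneg (by linarith [hs2.1])]; linarith [hs2.2])
  have hcc : uIcc r1 r2 ⊆ {w : ℝ | 0 < h w} := by
    refine subset_trans (uIcc_subset_uIcc_union_uIcc (b := q)) (union_subset hc1 ?_)
    rwa [uIcc_comm]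
  rw [← hy1, ← hy2]
  rw [← hy1, ← hy2] at hcc
  exact congrArg Subtype.val (rel_rep_eq hcc)

end Comp

end Whit

open Whit

/-- **Lemma 2.1 (Whitney-type partition).** If `h` has property (L) and
`U = {h > 0}`, then there is a countable collection `G` of closed bounded intervals
(encoded by their endpoint pairs) covering exactly `U`, each meeting exactly two others
(one on each side) with length ratios in `[1/2, 2]`, disjoint ones separated by at least a
quarter length, doubles contained in `U`, lengths comparable to `h` with factor `6`,
together with a subordinate smooth partition of unity with derivative bounds uniform in `h`. -/
theorem whitney_partition_of_propertyL :
    ∃ Cψ : ℕ → ℝ, (∀ j, 0 < Cψ j) ∧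
      ∀ h : ℝ → ℝ, PropertyL h →
        ∃ (G : Set (ℝ × ℝ)) (ψ : ℝ × ℝ → ℝ → ℝ),
          G.Countable ∧ (∀ I ∈ G, I.1 < I.2) ∧
          -- (i) the union of the intervals is U
          (⋃ I ∈ G, Set.Icc I.1 I.2) = {x : ℝ | 0 < h x} ∧
          -- (ii) every interval meets exactly two others, one on each side
          (∀ I ∈ G, ∃ J ∈ G, ∃ K ∈ G, J ≠ I ∧ K ≠ I ∧ J ≠ K ∧
            J.1 < I.1 ∧ I.2 < K.2 ∧
            (Set.Icc J.1 J.2 ∩ Set.Icc I.1 I.2).Nonempty ∧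
            (Set.Icc I.1 I.2 ∩ Set.Icc K.1 K.2).Nonempty ∧
            ∀ L ∈ G, L ≠ I → (Set.Icc L.1 L.2 ∩ Set.Icc I.1 I.2).Nonempty → L = J ∨ L = K) ∧
          -- (ii) ratio of lengths of intersecting intervals lies in [1/2, 2]
          (∀ I ∈ G, ∀ J ∈ G, (Set.Icc I.1 I.2 ∩ Set.Icc J.1 J.2).Nonempty →
            J.2 - J.1 ≤ 2 * (I.2 - I.1)) ∧
          -- (iii) disjoint intervals are separated by at least |I|/4
          (∀ I ∈ G, ∀ J ∈ G, Set.Icc I.1 I.2 ∩ Set.Icc J.1 J.2 = ∅ →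
            ∀ x ∈ Set.Icc I.1 I.2, ∀ y ∈ Set.Icc J.1 J.2, (I.2 - I.1) / 4 ≤ |x - y|) ∧
          -- (iv) the double interval lies inside U
          (∀ I ∈ G,
            Set.Icc (I.1 - (I.2 - I.1) / 2) (I.2 + (I.2 - I.1) / 2) ⊆ {x : ℝ | 0 < h x}) ∧
          -- (v) |I|, inf_I h and sup_I h are 6-comparable
          (∀ I ∈ G,
            max (I.2 - I.1) (max (sInf (h '' Set.Icc I.1 I.2)) (sSup (h '' Set.Icc I.1 I.2))) ≤
              6 * min (I.2 - I.1)
                (min (sInf (h '' Set.Icc I.1 I.2)) (sSup (h '' Set.Icc I.1 I.2)))) ∧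
          -- (vi) the subordinate smooth partition of unity
          (∀ I ∈ G, ContDiff ℝ (⊤ : ℕ∞) (ψ I) ∧ (∀ x, 0 ≤ ψ I x) ∧
            Function.support (ψ I) ⊆ Set.Icc I.1 I.2 ∧
            ∀ (j : ℕ) (x : ℝ), |iteratedDeriv j (ψ I) x| ≤ Cψ j * (I.2 - I.1) ^ (-(j : ℤ))) ∧
          (∀ x : ℝ, (0 < h x → HasSum (fun I : G => ψ I x) 1) ∧
            (¬ 0 < h x → HasSum (fun I : G => ψ I x) 0)) := by
  classical
  refine ⟨Cp, Cp_pos, ?_⟩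
  intro h hL
  set rp : {x : ℝ // 0 < h x} → ℝ := fun x => (rep h x : ℝ) with hrpdef
  have hrp : ∀ x, 0 < h (rp x) := fun x => (rep h x).2
  set G : Set (ℝ × ℝ) :=
    ⋃ (x : {x : ℝ // 0 < h x}), Set.range (fun n : ℤ => Ip h (rp x) n) with hGdef
  have hmem : ∀ p : ℝ × ℝ, p ∈ G ↔ ∃ x : {x : ℝ // 0 < h x}, ∃ n : ℤ,
      Ip h (rp x) n = p := by
    intro p
    simp only [hGdef, Set.mem_iUnion, Set.mem_range]
  have hIp1 : ∀ (r : ℝ) (n : ℤ), (Ip h r n).1 = ia h r n := fun _ _ => rfl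
  have hIp2 : ∀ (r : ℝ) (n : ℤ), (Ip h r n).2 = ib h r n := fun _ _ => rfl
  -- different components have disjoint intervals
  have hdiffcomp : ∀ (x y : {x : ℝ // 0 < h x}) (n m : ℤ), rep h x ≠ rep h y → ∀ z : ℝ,
      z ∈ Set.Icc (ia h (rp x) n) (ib h (rp x) n) →
      z ∈ Set.Icc (ia h (rp y) m) (ib h (rp y) m) → False := by
    intro x y n m hne z hz1 hz2
    have hu1 := Icc_sub_comp hL (hrp x) n hz1
    have hu2 := Icc_sub_comp hL (hrp y) m hz2
    apply hne
    apply rel_rep_eq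
    refine subset_trans (uIcc_subset_uIcc_union_uIcc (b := z)) (union_subset hu1 ?_)
    rwa [uIcc_comm]
  -- same chain, far indices: disjoint
  have hsamegap : ∀ (r : ℝ), 0 < h r → ∀ (n m : ℤ), n + 2 ≤ m → ∀ z : ℝ,
      z ∈ Set.Icc (ia h r n) (ib h r n) → z ∈ Set.Icc (ia h r m) (ib h r m) → False := by
    intro r hr n m hnm z hz1 hz2
    have := gap_pos hL hr hnm
    linarith [hz1.2, hz2.1]
  -- uniqueness of the representation
  have huniq : ∀ (x y : {x : ℝ // 0 < h x}) (n m : ℤ),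
      Ip h (rp x) n = Ip h (rp y) m → rep h x = rep h y ∧ n = m := by
    intro x y n m hpq
    have h1 : ia h (rp x) n = ia h (rp y) m := congrArg Prod.fst hpq
    have hz1 : ia h (rp x) n ∈ Set.Icc (ia h (rp x) n) (ib h (rp x) n) :=
      ⟨le_rfl, (ia_lt_ib hL (hrp x) n).le⟩
    have hz2 : ia h (rp x) n ∈ Set.Icc (ia h (rp y) m) (ib h (rp y) m) := by
      rw [h1]
      exact ⟨le_rfl, (ia_lt_ib hL (hrp y) m).le⟩
    have hu1 := Icc_sub_comp hL (hrp x) n hz1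
    have hu2 := Icc_sub_comp hL (hrp y) m hz2
    have hre : rep h x = rep h y := by
      apply rel_rep_eq
      refine subset_trans (uIcc_subset_uIcc_union_uIcc (b := ia h (rp x) n))
        (union_subset hu1 ?_)
      rwa [uIcc_comm]
    refine ⟨hre, ?_⟩
    have hval : rp x = rp y := congrArg Subtype.val hre
    rw [hval] at h1
    exact (ia_strictMono hL (hrp y)).injective h1
  set ψ : ℝ × ℝ → ℝ → ℝ := fun p =>
    if hp : ∃ x : {x : ℝ // 0 < h x}, ∃ n : ℤ, Ip h (rp x) n = p then
      psi h (rp hp.choose) hp.choose_spec.choose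
    else fun _ => 0 with hψdef
  have hpsi_eq : ∀ (x : {x : ℝ // 0 < h x}) (n : ℤ),
      ψ (Ip h (rp x) n) = psi h (rp x) n := by
    intro x n
    have hp : ∃ x' : {x : ℝ // 0 < h x}, ∃ n' : ℤ, Ip h (rp x') n' = Ip h (rp x) n := ⟨x, n, rfl⟩
    rw [hψdef]
    simp only [dif_pos hp]
    obtain ⟨hre, hneq⟩ := huniq _ _ _ _ hp.choose_spec.choose_spec
    exact congrArg₂ (psi h) (congrArg Subtype.val hre) hneq
  have hGc : G.Countable := by
    have hGeq : G = ⋃ r ∈ Set.range (fun x : {x : ℝ // 0 < h x} => (rep h x : ℝ)),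
        Set.range (fun n : ℤ => Ip h r n) := by
      ext p
      simp only [hGdef, Set.mem_iUnion, Set.mem_range, exists_prop]
      constructor
      · rintro ⟨x, n, rfl⟩
        exact ⟨rp x, ⟨x, rfl⟩, n, rfl⟩
      · rintro ⟨r, ⟨x, rfl⟩, n, rfl⟩
        exact ⟨x, n, rfl⟩
    rw [hGeq]
    exact (R_countable hL).biUnion (fun r _ => Set.countable_range _)
  refine ⟨G, ψ, hGc, ?_, ?_, ?_, ?_, ?_, ?_, ?_, ?_, ?_⟩
  · -- endpoints ordered
    intro I hI
    obtain ⟨x, n, rfl⟩ := (hmem I).1 hI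
    exact ia_lt_ib hL (hrp x) n
  · -- union is U
    ext z
    simp only [Set.mem_iUnion, exists_prop, Set.mem_setOf_eq]
    constructor
    · rintro ⟨I, hI, hzI⟩
      obtain ⟨x, n, rfl⟩ := (hmem I).1 hI
      exact I_sub hL (hrp x) n hzI
    · intro hz
      set X : {x : ℝ // 0 < h x} := ⟨z, hz⟩ with hX
      have hrel : uIcc (rp X) z ⊆ {w : ℝ | 0 < h w} := rep_rel X
      obtain ⟨n, hn⟩ := chain_covers hL (hrp X) hz hrel
      refine ⟨Ip h (rp X) n, (hmem _).2 ⟨X, n, rfl⟩, ?_⟩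
      rw [hIp1, hIp2]
      exact ⟨le_trans (tc_mem hL (hrp X) n).1 hn.1, le_trans hn.2 (tc_succ_mem hL (hrp X) n).2⟩
  · -- (ii) exactly two neighbours
    intro I hI
    obtain ⟨x, n, rfl⟩ := (hmem I).1 hI
    refine ⟨Ip h (rp x) (n-1), (hmem _).2 ⟨x, n-1, rfl⟩,
      Ip h (rp x) (n+1), (hmem _).2 ⟨x, n+1, rfl⟩, ?_, ?_, ?_, ?_, ?_, ?_, ?_, ?_⟩
    · intro hc
      obtain ⟨-, hnm⟩ := huniq _ _ _ _ hc
      omega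
    · intro hc
      obtain ⟨-, hnm⟩ := huniq _ _ _ _ hc
      omega
    · intro hc
      obtain ⟨-, hnm⟩ := huniq _ _ _ _ hc
      omega
    · exact ia_strictMono hL (hrp x) (by omega : n - 1 < n)
    · exact ib_strictMono hL (hrp x) (by omega : n < n + 1)
    · refine ⟨tc h (rp x) n, ?_, tc_mem hL (hrp x) n⟩
      have := tc_succ_mem hL (hrp x) (n-1)
      rw [show n - 1 + 1 = n by ring] at this
      exact this
    · exact ⟨tc h (rp x) (n+1), tc_succ_mem hL (hrp x) n, tc_mem hL (hrp x) (n+1)⟩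
    · intro L hL2 hLne hLint
      obtain ⟨y, m, rfl⟩ := (hmem L).1 hL2
      obtain ⟨z, hzL, hzI⟩ := hLint
      have hre : rep h y = rep h x := by
        by_contra hne
        exact hdiffcomp y x m n hne z hzL hzI
      have hval : rp y = rp x := congrArg Subtype.val hre
      rw [hval] at hzL ⊢
      have hmn : m = n - 1 ∨ m = n + 1 := by
        rcases lt_trichotomy m n with hc | hc | hc
        · left
          by_contra hc2
          exact hsamegap (rp x) (hrp x) m n (by omega) z hzL hzI
        · exfalso
          apply hLne
          rw [hval, hc]
        · right
          by_contra hc2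
          exact hsamegap (rp x) (hrp x) n m (by omega) z hzI hzL
      rcases hmn with rfl | rfl
      · exact Or.inl rfl
      · exact Or.inr rfl
  · -- ratio of intersecting intervals
    intro I hI J hJ hint
    obtain ⟨x, n, rfl⟩ := (hmem I).1 hI
    obtain ⟨y, m, rfl⟩ := (hmem J).1 hJ
    obtain ⟨z, hzI, hzJ⟩ := hint
    have hre : rep h y = rep h x := by
      by_contra hne
      exact hdiffcomp y x m n hne z hzJ hzI
    have hval : rp y = rp x := congrArg Subtype.val hre
    rw [hval] at hzJ ⊢
    rw [hIp1, hIp2, hIp1, hIp2]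
    have hlenI : ib h (rp x) n - ia h (rp x) n = Ilen h (rp x) n := rfl
    have hlenJ : ib h (rp x) m - ia h (rp x) m = Ilen h (rp x) m := rfl
    rw [hlenI, hlenJ]
    have hmn : n - 1 ≤ m ∧ m ≤ n + 1 := by
      constructor
      · by_contra hc
        exact hsamegap (rp x) (hrp x) m n (by omega) z hzJ hzI
      · by_contra hc
        exact hsamegap (rp x) (hrp x) n m (by omega) z hzI hzJ
    rcases lt_trichotomy m n with hc | hc | hc
    · have hm : m = n - 1 := by omega
      subst hm
      have := (Ilen_ratio hL (hrp x) (n-1)).2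
      rw [show n - 1 + 1 = n by ring] at this
      linarith
    · subst hc
      have := Ilen_pos hL (hrp x) m
      linarith
    · have hm : m = n + 1 := by omega
      subst hm
      exact (Ilen_ratio hL (hrp x) n).1
  · -- (iii) separation
    intro I hI J hJ hdisj p hp q hq
    obtain ⟨x, n, rfl⟩ := (hmem I).1 hI
    obtain ⟨y, m, rfl⟩ := (hmem J).1 hJ
    rw [hIp1, hIp2] at hp hq ⊢
    have hlenI : ib h (rp x) n - ia h (rp x) n = Ilen h (rp x) n := rfl
    rw [hlenI]
    by_cases hre : rep h y = rep h x
    · have hval : rp y = rp x := congrArg Subtype.val hre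
      rw [hval] at hq
      simp only [hIp1, hIp2, hval] at hdisj
      have hmn : n + 2 ≤ m ∨ m + 2 ≤ n := by
        by_contra hcc
        push_neg at hcc
        have hm : m = n - 1 ∨ m = n ∨ m = n + 1 := by omega
        have hnon : (Set.Icc (ia h (rp x) n) (ib h (rp x) n) ∩
            Set.Icc (ia h (rp x) m) (ib h (rp x) m)).Nonempty := by
          rcases hm with h1 | h1 | h1 <;> rw [h1]
          · refine ⟨tc h (rp x) n, tc_mem hL (hrp x) n, ?_⟩
            have := tc_succ_mem hL (hrp x) (n-1)
            rwa [show n - 1 + 1 = n by ring] at this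
          · exact ⟨tc h (rp x) n, tc_mem hL (hrp x) n, tc_mem hL (hrp x) n⟩
          · exact ⟨tc h (rp x) (n+1), tc_succ_mem hL (hrp x) n, tc_mem hL (hrp x) (n+1)⟩
        rw [hdisj] at hnon
        exact Set.not_nonempty_empty hnon
      rcases hmn with hc | hc
      · have := (gap_est hL (hrp x) hc).1
        have habs : q - p ≤ |p - q| := by
          rw [abs_sub_comm]
          exact le_abs_self _
        linarith [hp.2, hq.1]
      · have := (gap_est hL (hrp x) hc).2
        have habs : p - q ≤ |p - q| := le_abs_self _
        linarith [hp.1, hq.2]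
    · -- different components: a zero of h lies between p and q
      have hzero : ∃ z ∈ uIcc p q, h z = 0 := by
        by_contra hc
        push_neg at hc
        have hsub : uIcc p q ⊆ {w : ℝ | 0 < h w} := by
          intro w hw
          have := hc w hw
          have := hL.2.1 w
          simp only [Set.mem_setOf_eq]
          rcases lt_or_eq_of_le (hL.2.1 w) with hlt | heq
          · exact hlt
          · exact absurd heq.symm (hc w hw)
        apply hre
        apply rel_rep_eq
        have hu1 := Icc_sub_comp hL (hrp y) m hq
        have hu2 := Icc_sub_comp hL (hrp x) n hp
        refine subset_trans (uIcc_subset_uIcc_union_uIcc (b := q)) (union_subset hu1 ?_)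
        refine subset_trans (uIcc_subset_uIcc_union_uIcc (b := p)) (union_subset ?_ ?_)
        · rwa [uIcc_comm]
        · rwa [uIcc_comm]
      obtain ⟨z, hzm, hz0⟩ := hzero
      have hp_pos : 0 < h p := I_sub hL (hrp x) n hp
      have hzlt := lemZ hL hp_pos hz0
      have habs : |p - z| ≤ |p - q| := abs_sub_le_of_mem_uIcc hzm
      have hhp : Hc h (rp x) n / 2 ≤ h p := by
        obtain ⟨-, c2, -, -, -⟩ := sup_inf_facts hL (hrp x) n
        exact le_trans c2 (sInf_le_img hL hp)
      have hwin := (Ilen_window hL (hrp x) n).2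
      linarith
  · -- (iv) doubled interval inside U
    intro I hI
    obtain ⟨x, n, rfl⟩ := (hmem I).1 hI
    rw [hIp1, hIp2]
    have hlenI : ib h (rp x) n - ia h (rp x) n = Ilen h (rp x) n := rfl
    rw [hlenI]
    exact double_sub hL (hrp x) n
  · -- (v) comparability
    intro I hI
    obtain ⟨x, n, rfl⟩ := (hmem I).1 hI
    exact lemV hL (hrp x) n
  · -- (vi) properties of each ψ I
    intro I hI
    obtain ⟨x, n, rfl⟩ := (hmem I).1 hI
    rw [hpsi_eq x n, hIp1, hIp2]
    refine ⟨psi_contDiff n, psi_nonneg hL (hrp x) n, psi_support hL (hrp x) n, ?_⟩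
    intro j z
    have hlenI : ib h (rp x) n - ia h (rp x) n = Ilen h (rp x) n := rfl
    rw [hlenI]
    exact psi_iter_bound hL (hrp x) n j z
  · -- (vi) partition of unity
    intro z
    constructor
    · intro hz
      set X : {x : ℝ // 0 < h x} := ⟨z, hz⟩ with hX
      have hrel : uIcc (rp X) z ⊆ {w : ℝ | 0 < h w} := rep_rel X
      obtain ⟨n, hn⟩ := chain_covers hL (hrp X) hz hrel
      obtain ⟨k, hsum, hzero⟩ := psi_partition hL (hrp X) n hn
      have hP1 : Ip h (rp X) k ∈ G := (hmem _).2 ⟨X, k, rfl⟩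
      have hP2 : Ip h (rp X) (k+1) ∈ G := (hmem _).2 ⟨X, k+1, rfl⟩
      set e1 : G := ⟨Ip h (rp X) k, hP1⟩ with he1
      set e2 : G := ⟨Ip h (rp X) (k+1), hP2⟩ with he2
      have hne : e1 ≠ e2 := by
        intro hc
        have : Ip h (rp X) k = Ip h (rp X) (k+1) := congrArg Subtype.val hc
        obtain ⟨-, hnm⟩ := huniq _ _ _ _ this
        omega
      have hzero' : ∀ b : G, b ∉ ({e1, e2} : Finset G) → ψ (b : ℝ × ℝ) z = 0 := by
        intro b hb
        obtain ⟨y, m, hym⟩ := (hmem (b : ℝ × ℝ)).1 b.2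
        rw [← hym, hpsi_eq]
        by_cases hre : rep h y = rep h X
        · have hval : rp y = rp X := congrArg Subtype.val hre
          rw [hval]
          have hmk : m ≠ k := by
            intro hc
            apply hb
            have : (b : ℝ × ℝ) = Ip h (rp X) k := by rw [← hym, hval, hc]
            have hbe : b = e1 := Subtype.ext this
            rw [hbe]
            exact Finset.mem_insert_self _ _
          have hmk1 : m ≠ k + 1 := by
            intro hc
            apply hb
            have : (b : ℝ × ℝ) = Ip h (rp X) (k+1) := by rw [← hym, hval, hc]
            have hbe : b = e2 := Subtype.ext this
            rw [hbe]
            exact Finset.mem_insert_of_mem (Finset.mem_singleton_self _)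
          exact hzero m hmk hmk1
        · by_contra hne0
          have hzin : z ∈ Set.Icc (ia h (rp y) m) (ib h (rp y) m) :=
            psi_support hL (hrp y) m (Function.mem_support.2 hne0)
          have hzin2 : z ∈ Set.Icc (ia h (rp X) n) (ib h (rp X) n) :=
            ⟨le_trans (tc_mem hL (hrp X) n).1 hn.1, le_trans hn.2 (tc_succ_mem hL (hrp X) n).2⟩
          exact hdiffcomp y X m n hre z hzin hzin2
      have hhs := hasSum_sum_of_ne_finset_zero (s := ({e1, e2} : Finset G)) (L := SummationFilter.unconditional G)
        (f := fun I : G => ψ (I : ℝ × ℝ) z) hzero'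
      have hsum2 : ∑ b ∈ ({e1, e2} : Finset G), ψ (b : ℝ × ℝ) z = 1 := by
        rw [Finset.sum_pair hne]
        show ψ (Ip h (rp X) k) z + ψ (Ip h (rp X) (k+1)) z = 1
        rw [hpsi_eq, hpsi_eq]
        exact hsum
      rwa [hsum2] at hhs
    · intro hz
      have hall : (fun I : G => ψ (I : ℝ × ℝ) z) = fun _ => 0 := by
        funext b
        obtain ⟨y, m, hym⟩ := (hmem (b : ℝ × ℝ)).1 b.2
        rw [← hym, hpsi_eq]
        by_contra hne0
        have hzin : z ∈ Set.Icc (ia h (rp y) m) (ib h (rp y) m) :=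
          psi_support hL (hrp y) m (Function.mem_support.2 hne0)
        exact hz (I_sub hL (hrp y) m hzin)
      rw [hall]
      exact hasSum_zero
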